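/- Let E be a complete real normed vector space, S ⊆ E a nonempty closed set, q ∈ (0,1), C ≥ 0, D ≥ 0, and let (z_t)_{t ≥ 0} be a sequence in E satisfying infDist(z_t, S) ≤ q^t · D and ‖z_{t+1} - z_t‖ ≤ C · infDist(z_t, S) for all t ≥ 0. Then ‖z_t - z_0‖ ≤ C·D/(1 - q) for all t ≥ 0, the sequence (z_t) converges to some point z̃, and z̃ ∈ S. -/
import Mathlib


/-- In a complete real normed vector space, if `S` is nonempty and closed,
`q ∈ (0,1)`, `C, D ≥ 0`, and the sequence `(z t)` satisfies `infDist (z t) S ≤ qᵗ·D` and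
`‖z (t+1) - z t‖ ≤ C·infDist (z t) S` for all `t`, then `‖z t - z 0‖ ≤ C·D/(1 - q)` for all
`t`, and the sequence converges to some point of `S`. -/
theorem stmt_19 {E : Type*} [NormedAddCommGroup E] [NormedSpace ℝ E] [CompleteSpace E]
    (S : Set E) (hSne : S.Nonempty) (hSclosed : IsClosed S)
    (q : ℝ) (hq0 : 0 < q) (hq1 : q < 1) (C D : ℝ) (hC : 0 ≤ C) (hD : 0 ≤ D)
    (z : ℕ → E)
    (hdist : ∀ t : ℕ, Metric.infDist (z t) S ≤ q ^ t * D)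
    (hstep : ∀ t : ℕ, ‖z (t + 1) - z t‖ ≤ C * Metric.infDist (z t) S) :
    (∀ t : ℕ, ‖z t - z 0‖ ≤ C * D / (1 - q)) ∧
      ∃ ztilde ∈ S, Filter.Tendsto z Filter.atTop (nhds ztilde) := by
  have hgeom : ∀ n : ℕ, dist (z n) (z (n + 1)) ≤ C * D * q ^ n := by
    intro n
    rw [dist_comm, dist_eq_norm]
    calc ‖z (n + 1) - z n‖ ≤ C * Metric.infDist (z n) S := hstep n
      _ ≤ C * (q ^ n * D) := by
          exact mul_le_mul_of_nonneg_left (hdist n) hC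
      _ = C * D * q ^ n := by ring
  have hcauchy : CauchySeq z := cauchySeq_of_le_geometric q (C * D) hq1 hgeom
  obtain ⟨a, ha⟩ := cauchySeq_tendsto_of_complete hcauchy
  have hsum : HasSum (fun n : ℕ ↦ C * D * q ^ n) (C * D / (1 - q)) :=
    aux_hasSum_of_le_geometric hq1 hgeom
  have hbound : ∀ t : ℕ, ‖z t - z 0‖ ≤ C * D / (1 - q) := by
    intro t
    rw [← dist_eq_norm, dist_comm]
    calc dist (z 0) (z t) ≤ ∑ i ∈ Finset.range t, dist (z i) (z (i + 1)) :=
          dist_le_range_sum_dist z t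
      _ ≤ ∑ i ∈ Finset.range t, C * D * q ^ i :=
          Finset.sum_le_sum fun i _ ↦ hgeom i
      _ ≤ C * D / (1 - q) :=
          sum_le_hasSum _ (fun i _ ↦ by positivity) hsum
  refine ⟨hbound, a, ?_, ha⟩
  have h0 : Filter.Tendsto (fun t ↦ Metric.infDist (z t) S) Filter.atTop (nhds 0) := by
    have hup : Filter.Tendsto (fun t : ℕ ↦ q ^ t * D) Filter.atTop (nhds 0) := by
      simpa using (tendsto_pow_atTop_nhds_zero_of_lt_one hq0.le hq1).mul_const D
    exact squeeze_zero (fun t ↦ Metric.infDist_nonneg) hdist hup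
  have hcont : Filter.Tendsto (fun t ↦ Metric.infDist (z t) S) Filter.atTop
      (nhds (Metric.infDist a S)) :=
    ((Metric.continuous_infDist_pt S).continuousAt.tendsto.comp ha)
  have : Metric.infDist a S = 0 := tendsto_nhds_unique hcont h0
  exact (hSclosed.mem_iff_infDist_zero hSne).mpr this
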